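/- arXiv:2509.24942 — 3 statements merged into one kernel-verified Lean document; each statement's English description precedes it below -/
import Mathlib

section
/- Let x, y, q be complex numbers with |q| < 1, and suppose x²y·q^k ≠ 1 for every integer k ≥ 0. Then Σ_{i,j,k≥0} q^(C(k,2)+C(i+j+k,2)) · (−1)^(i+j) · x^(2i+2k+j) · y^(2j+2k+i) / ((q;q)_i · (q;q)_j · (q;q)_k) = (x²y;q)_∞ · Σ_{k≥0} (x;q)_k · (−1)^k · q^(C(k,2)) · (xy²)^k / ((q;q)_k · (x²y;q)_k), where C(m,2) = m(m−1)/2. -/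
/-- Finite q-Pochhammer symbol `(a; q)_n = ∏_{k=0}^{n-1} (1 - a q^k)`. -/
noncomputable def qPoch (a q : ℂ) (n : ℕ) : ℂ := ∏ k ∈ Finset.range n, (1 - a * q ^ k)

/-- Infinite q-Pochhammer symbol `(a; q)_∞ = ∏_{k=0}^{∞} (1 - a q^k)`. -/
noncomputable def qPochInf (a q : ℂ) : ℂ := ∏' k : ℕ, (1 - a * q ^ k)

open Filter Finset Topology

lemma qp_succ (a q : ℂ) (n : ℕ) : qPoch a q (n+1) = qPoch a q n * (1 - a * q ^ n) :=
  Finset.prod_range_succ _ _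

lemma qp_add (a q : ℂ) (k n : ℕ) : qPoch a q (k+n) = qPoch a q k * qPoch (a * q ^ k) q n := by
  unfold qPoch
  rw [Finset.prod_range_add]
  congr 1
  refine Finset.prod_congr rfl fun i _ => ?_
  rw [pow_add]; ring

lemma choose_two_succ (n : ℕ) : (n+1).choose 2 = n.choose 2 + n := by
  rw [Nat.choose_succ_succ]
  simp [Nat.choose_one_right, Nat.add_comm]

lemma choose_two_add (a b : ℕ) : (a+b).choose 2 = a.choose 2 + b.choose 2 + a * b := by
  induction b with
  | zero => simp
  | succ b ih =>
    have h1 : a + (b+1) = (a+b) + 1 := by omega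
    rw [h1, choose_two_succ, ih, choose_two_succ]
    ring

lemma summable_choose_pow {r s : ℝ} (hr0 : 0 ≤ r) (hr : r < 1) (hs : 0 ≤ s) :
    Summable (fun n : ℕ => r ^ n.choose 2 * s ^ n) := by
  apply summable_of_ratio_norm_eventually_le (r := 1/2) (by norm_num)
  have h0 : Tendsto (fun n : ℕ => r ^ n * s) atTop (𝓝 (0 * s)) :=
    (tendsto_pow_atTop_nhds_zero_of_lt_one hr0 hr).mul_const s
  rw [zero_mul] at h0
  filter_upwards [h0.eventually_le_const (by norm_num : (0:ℝ) < 1/2)] with n hn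
  have h1 : ((n+1).choose 2) = n.choose 2 + n := choose_two_succ n
  rw [h1]
  have hterm : 0 ≤ r ^ n.choose 2 * s ^ n :=
    mul_nonneg (pow_nonneg hr0 _) (pow_nonneg hs _)
  rw [Real.norm_of_nonneg (mul_nonneg (pow_nonneg hr0 _) (pow_nonneg hs _)),
    Real.norm_of_nonneg hterm, pow_add, pow_succ]
  calc r ^ n.choose 2 * r ^ n * (s ^ n * s) = (r ^ n * s) * (r ^ n.choose 2 * s ^ n) := by ring
    _ ≤ (1/2) * (r ^ n.choose 2 * s ^ n) := by
        apply mul_le_mul_of_nonneg_right hn hterm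

lemma exp_le_one_sub {t r : ℝ} (h0 : 0 ≤ t) (h1 : t ≤ r) (hr : r < 1) :
    Real.exp (-(t/(1-r))) ≤ 1 - t := by
  have h2 : (0:ℝ) < 1 - r := by linarith
  have h3 := Real.add_one_le_exp (t/(1-r))
  have h4 := Real.exp_pos (-(t/(1-r)))
  have h5 : Real.exp (-(t/(1-r))) * Real.exp (t/(1-r)) = 1 := by
    rw [← Real.exp_add]; simp
  have hs0 : 0 ≤ t/(1-r) := div_nonneg h0 h2.le
  have h6 : t/(1-r) * (1-r) = t := div_mul_cancel₀ _ h2.ne'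
  have h7 : 1 ≤ (1-t) * Real.exp (t/(1-r)) := by nlinarith [h3, hs0, h6]
  nlinarith [h4, h5, h7, mul_nonneg h4.le (by linarith [h7] : (0:ℝ) ≤ (1-t) * Real.exp (t/(1-r)) - 1)]

lemma norm_qPoch_le {q : ℂ} (hq : ‖q‖ < 1) (a : ℂ) (n : ℕ) :
    ‖qPoch a q n‖ ≤ Real.exp (‖a‖ / (1 - ‖q‖)) := by
  have hq0 : (0:ℝ) ≤ ‖q‖ := norm_nonneg q
  have h2 : (0:ℝ) < 1 - ‖q‖ := by linarith
  rw [qPoch, norm_prod]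
  calc ∏ k ∈ Finset.range n, ‖1 - a * q ^ k‖
      ≤ ∏ k ∈ Finset.range n, Real.exp (‖a‖ * ‖q‖ ^ k) := by
        apply Finset.prod_le_prod (fun k _ => norm_nonneg _) (fun k _ => ?_)
        calc ‖1 - a * q ^ k‖ ≤ ‖(1:ℂ)‖ + ‖a * q ^ k‖ := norm_sub_le _ _
          _ = 1 + ‖a‖ * ‖q‖ ^ k := by simp [norm_mul, norm_pow]
          _ ≤ Real.exp (‖a‖ * ‖q‖ ^ k) := by
              have := Real.add_one_le_exp (‖a‖ * ‖q‖ ^ k); linarith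
    _ = Real.exp (∑ k ∈ Finset.range n, ‖a‖ * ‖q‖ ^ k) := (Real.exp_sum _ _).symm
    _ ≤ Real.exp (‖a‖ / (1 - ‖q‖)) := by
        apply Real.exp_le_exp.2
        rw [← Finset.mul_sum, div_eq_mul_inv]
        apply mul_le_mul_of_nonneg_left ?_ (norm_nonneg a)
        calc ∑ k ∈ Finset.range n, ‖q‖ ^ k ≤ ∑' k : ℕ, ‖q‖ ^ k :=
              Summable.sum_le_tsum _ (fun k _ => pow_nonneg hq0 k)
                (summable_geometric_of_lt_one hq0 hq)
          _ = (1 - ‖q‖)⁻¹ := tsum_geometric_of_lt_one hq0 hq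

lemma norm_qPochQ_ge {q : ℂ} (hq : ‖q‖ < 1) (n : ℕ) :
    Real.exp (-(‖q‖ / (1 - ‖q‖) / (1 - ‖q‖))) ≤ ‖qPoch q q n‖ := by
  have hq0 : (0:ℝ) ≤ ‖q‖ := norm_nonneg q
  have h2 : (0:ℝ) < 1 - ‖q‖ := by linarith
  rw [qPoch, norm_prod]
  calc Real.exp (-(‖q‖ / (1 - ‖q‖) / (1 - ‖q‖)))
      ≤ Real.exp (-(∑ k ∈ Finset.range n, ‖q‖ ^ (k+1)) / (1 - ‖q‖)) := by
        apply Real.exp_le_exp.2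
        rw [neg_div, neg_le_neg_iff, div_le_div_iff_of_pos_right h2]
        calc ∑ k ∈ Finset.range n, ‖q‖ ^ (k+1)
            ≤ ∑' k : ℕ, ‖q‖ ^ (k+1) :=
              Summable.sum_le_tsum _ (fun k _ => pow_nonneg hq0 _)
                ((summable_geometric_of_lt_one hq0 hq).comp_injective (add_left_injective 1))
          _ = ‖q‖ * ∑' k : ℕ, ‖q‖ ^ k := by
              rw [← tsum_mul_left]
              exact tsum_congr fun k => by rw [pow_succ]; ring
          _ = ‖q‖ * (1 - ‖q‖)⁻¹ := by rw [tsum_geometric_of_lt_one hq0 hq]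
          _ = ‖q‖ / (1 - ‖q‖) := by rw [div_eq_mul_inv]
    _ = ∏ k ∈ Finset.range n, Real.exp (-(‖q‖ ^ (k+1) / (1 - ‖q‖))) := by
        rw [← Real.exp_sum]
        congr 1
        simp [Finset.sum_div, neg_div]
    _ ≤ ∏ k ∈ Finset.range n, ‖1 - q * q ^ k‖ := by
        apply Finset.prod_le_prod (fun k _ => (Real.exp_pos _).le) (fun k _ => ?_)
        have hk : ‖q‖ ^ (k+1) ≤ ‖q‖ := by
          calc ‖q‖ ^ (k+1) ≤ ‖q‖ ^ 1 := pow_le_pow_of_le_one hq0 hq.le (by omega)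
            _ = ‖q‖ := pow_one _
        calc Real.exp (-(‖q‖ ^ (k+1) / (1 - ‖q‖)))
            ≤ 1 - ‖q‖ ^ (k+1) := exp_le_one_sub (pow_nonneg hq0 _) hk hq
          _ = 1 - ‖q * q ^ k‖ := by rw [norm_mul, norm_pow, ← pow_succ']
          _ ≤ ‖1 - q * q ^ k‖ := by
              have := norm_sub_norm_le (1 : ℂ) (q * q ^ k)
              simpa using this

lemma multipliable_qp {q : ℂ} (hq : ‖q‖ < 1) (a : ℂ) (h : ∀ k : ℕ, 1 - a * q ^ k ≠ 0) :
    Multipliable (fun k : ℕ => 1 - a * q ^ k) := by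
  have hq0 : (0:ℝ) ≤ ‖q‖ := norm_nonneg q
  have hlog : Summable (fun k : ℕ => Complex.log (1 - a * q ^ k)) := by
    apply Summable.of_norm_bounded_eventually_nat (g := fun k => 3/2 * (‖a‖ * ‖q‖ ^ k))
    · exact ((summable_geometric_of_lt_one hq0 hq).mul_left ‖a‖).mul_left (3/2)
    · have h0 : Tendsto (fun k : ℕ => ‖a‖ * ‖q‖ ^ k) atTop (𝓝 (‖a‖ * 0)) :=
        (tendsto_pow_atTop_nhds_zero_of_lt_one hq0 hq).const_mul ‖a‖
      rw [mul_zero] at h0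
      filter_upwards [h0.eventually_le_const (by norm_num : (0:ℝ) < 1/2)] with k hk
      have h1 : ‖-(a * q ^ k)‖ ≤ 1/2 := by
        rw [norm_neg, norm_mul, norm_pow]; exact hk
      have h2 := Complex.norm_log_one_add_half_le_self h1
      have h3 : (1 : ℂ) + -(a * q ^ k) = 1 - a * q ^ k := by ring
      rw [h3] at h2
      calc ‖Complex.log (1 - a * q ^ k)‖ ≤ 3/2 * ‖-(a * q ^ k)‖ := h2
        _ = 3/2 * (‖a‖ * ‖q‖ ^ k) := by rw [norm_neg, norm_mul, norm_pow]
  exact Complex.multipliable_of_summable_log hlog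

lemma tendsto_qPoch {q : ℂ} (hq : ‖q‖ < 1) (a : ℂ) (h : ∀ k : ℕ, 1 - a * q ^ k ≠ 0) :
    Tendsto (fun n => qPoch a q n) atTop (𝓝 (qPochInf a q)) :=
  (multipliable_qp hq a h).hasProd.tendsto_prod_nat

lemma hPq {q : ℂ} (hq : ‖q‖ < 1) : ∀ k : ℕ, 1 - q * q ^ k ≠ 0 := by
  intro k h
  have h1 : (q * q ^ k) = 1 := by linear_combination -h
  have h2 : ‖q * q ^ k‖ = 1 := by rw [h1, norm_one]
  have h3 : ‖q * q ^ k‖ < 1 := by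
    rw [norm_mul, norm_pow, ← pow_succ']
    exact pow_lt_one₀ (norm_nonneg q) hq (by omega)
  linarith

lemma qPoch_q_ne_zero {q : ℂ} (hq : ‖q‖ < 1) (n : ℕ) : qPoch q q n ≠ 0 :=
  Finset.prod_ne_zero_iff.2 fun k _ => hPq hq k

lemma norm_qPochInfQ_ge {q : ℂ} (hq : ‖q‖ < 1) :
    Real.exp (-(‖q‖ / (1 - ‖q‖) / (1 - ‖q‖))) ≤ ‖qPochInf q q‖ :=
  ge_of_tendsto ((tendsto_qPoch hq q (hPq hq)).norm)
    (Eventually.of_forall (norm_qPochQ_ge hq))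

lemma qPochInf_split {q : ℂ} (hq : ‖q‖ < 1) (a : ℂ) (h : ∀ k : ℕ, 1 - a * q ^ k ≠ 0) (k : ℕ) :
    qPochInf a q = qPoch a q k * qPochInf (a * q ^ k) q := by
  have h2 : ∀ j : ℕ, 1 - (a * q ^ k) * q ^ j ≠ 0 := by
    intro j
    have := h (k + j)
    rwa [pow_add, ← mul_assoc] at this
  have t1 : Tendsto (fun n => qPoch a q (k + n)) atTop (𝓝 (qPochInf a q)) := by
    have := (tendsto_qPoch hq a h).comp (tendsto_add_atTop_nat k)
    apply this.congr
    intro n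
    simp [Nat.add_comm]
  have t2 : Tendsto (fun n => qPoch a q (k + n)) atTop
      (𝓝 (qPoch a q k * qPochInf (a * q ^ k) q)) := by
    have := (tendsto_qPoch hq (a * q ^ k) h2).const_mul (qPoch a q k)
    apply this.congr
    intro n
    rw [← qp_add]
  exact tendsto_nhds_unique t1 t2

lemma step_aux {F1 F : ℕ → ℂ} {w : ℂ} (n : ℕ)
    (h0 : F1 0 = F 0) (hlast : F1 (n+1) = -(F n * w))
    (hmid : ∀ i < n, F1 (i+1) = F (i+1) - F i * w) :
    ∑ i ∈ Finset.range (n+2), F1 i = (∑ i ∈ Finset.range (n+1), F i) * (1 - w) := by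
  have hs : ∑ i ∈ Finset.range n, F1 (i+1) = ∑ i ∈ Finset.range n, (F (i+1) - F i * w) :=
    Finset.sum_congr rfl fun i hi => hmid i (Finset.mem_range.1 hi)
  calc ∑ i ∈ Finset.range (n+2), F1 i
      = (∑ i ∈ Finset.range n, F1 (i+1) + F1 0) + F1 (n+1) := by
        rw [Finset.sum_range_succ, Finset.sum_range_succ']
    _ = (∑ i ∈ Finset.range n, (F (i+1) - F i * w) + F 0) + -(F n * w) := by
        rw [hs, h0, hlast]
    _ = (∑ i ∈ Finset.range n, F (i+1) + F 0) - ((∑ i ∈ Finset.range n, F i * w) + F n * w) := by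
        rw [Finset.sum_sub_distrib]; ring
    _ = (∑ i ∈ Finset.range (n+1), F i) - (∑ i ∈ Finset.range (n+1), F i * w) := by
        rw [← Finset.sum_range_succ' F n, ← Finset.sum_range_succ]
    _ = (∑ i ∈ Finset.range (n+1), F i) * (1 - w) := by
        rw [← Finset.sum_mul]; ring

lemma qbinom {q : ℂ} (hq : ‖q‖ < 1) (z : ℂ) (n : ℕ) :
    qPoch z q n = ∑ i ∈ Finset.range (n+1),
      qPoch q q n / (qPoch q q i * qPoch q q (n - i)) * ((-1 : ℂ)^i * q ^ (i.choose 2) * z ^ i) := by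
  have hP : ∀ m : ℕ, qPoch q q m ≠ 0 := qPoch_q_ne_zero hq
  induction n with
  | zero => simp [qPoch]
  | succ n ih =>
    have hc : ∀ i : ℕ, ((-1 : ℂ)^(i+1) * q ^ ((i+1).choose 2) * z ^ (i+1))
        = -(z * q ^ i * ((-1 : ℂ)^i * q ^ (i.choose 2) * z ^ i)) := by
      intro i
      rw [choose_two_succ, pow_add, pow_succ, pow_succ]
      ring
    have pascal : ∀ i, i < n →
        qPoch q q (n+1) / (qPoch q q (i+1) * qPoch q q (n+1-(i+1))) * q ^ i
          = qPoch q q n / (qPoch q q (i+1) * qPoch q q (n-(i+1))) * q ^ i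
            + qPoch q q n / (qPoch q q i * qPoch q q (n-i)) * q ^ n := by
      intro i hi
      obtain ⟨d, rfl⟩ : ∃ d, n = (i+1)+d := ⟨n-(i+1), by omega⟩
      have e1 : (i+1)+d+1-(i+1) = d+1 := by omega
      have e2 : (i+1)+d-(i+1) = d := by omega
      have e3 : (i+1)+d-i = d+1 := by omega
      rw [e1, e2, e3]
      rw [show qPoch q q ((i+1)+d+1) = qPoch q q ((i+1)+d) * (1 - q * q ^ ((i+1)+d)) from
        qp_succ q q _]
      rw [show qPoch q q (d+1) = qPoch q q d * (1 - q * q ^ d) from qp_succ q q _]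
      rw [show qPoch q q (i+1) = qPoch q q i * (1 - q * q ^ i) from qp_succ q q _]
      have n1 := hP ((i+1)+d)
      have n2 := hP d
      have n3 := hP i
      have n4 := hPq hq d
      have n5 := hPq hq i
      field_simp
      ring
    rw [qp_succ, ih]
    symm
    refine step_aux (F1 := fun i => qPoch q q (n+1) / (qPoch q q i * qPoch q q (n+1-i)) *
        ((-1 : ℂ)^i * q ^ (i.choose 2) * z ^ i))
      (F := fun i => qPoch q q n / (qPoch q q i * qPoch q q (n-i)) *
        ((-1 : ℂ)^i * q ^ (i.choose 2) * z ^ i)) (w := z * q ^ n) n ?_ ?_ ?_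
    · have h0 : qPoch q q 0 = 1 := Finset.prod_range_zero _
      simp only [Nat.sub_zero, h0, one_mul, pow_zero]
      rw [div_self (hP (n+1)), div_self (hP n)]
    · have h0 : qPoch q q 0 = 1 := Finset.prod_range_zero _
      have e1 : n+1-(n+1) = 0 := by omega
      have e2 : n-n = 0 := by omega
      simp only [e1, e2, h0, mul_one]
      rw [div_self (hP (n+1)), div_self (hP n), hc n]
      ring
    · intro i hi
      rw [hc i]
      linear_combination (-(z * ((-1:ℂ)^i * q^(i.choose 2) * z^i))) * pascal i hi

lemma euler_tsum {q : ℂ} (hq : ‖q‖ < 1) (z : ℂ) (hz : ∀ k : ℕ, 1 - z * q ^ k ≠ 0) :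
    ∑' m : ℕ, (-1 : ℂ)^m * q ^ (m.choose 2) * z ^ m / qPoch q q m = qPochInf z q := by
  have hq0 : (0:ℝ) ≤ ‖q‖ := norm_nonneg q
  have hP : ∀ m : ℕ, qPoch q q m ≠ 0 := qPoch_q_ne_zero hq
  set c0 : ℝ := Real.exp (-(‖q‖ / (1 - ‖q‖) / (1 - ‖q‖))) with hc0def
  have hc0 : 0 < c0 := Real.exp_pos _
  set Bq : ℝ := Real.exp (‖q‖ / (1 - ‖q‖)) with hBqdef
  set L : ℂ := qPochInf q q with hLdef
  have hL : L ≠ 0 := by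
    intro h
    have := norm_qPochInfQ_ge hq
    rw [← hLdef, h, norm_zero] at this
    exact absurd this (not_le.2 hc0)
  set g : ℕ → ℕ → ℂ := fun N m => if m ≤ N then
      qPoch q q N / (qPoch q q m * qPoch q q (N - m)) * ((-1 : ℂ)^m * q ^ (m.choose 2) * z ^ m)
    else 0 with hgdef
  have key : Tendsto (fun N => ∑' m, g N m) atTop
      (𝓝 (∑' m, (-1 : ℂ)^m * q ^ (m.choose 2) * z ^ m / qPoch q q m)) := by
    apply tendsto_tsum_of_dominated_convergence
      (bound := fun m => Bq / (c0 * c0) * (‖q‖ ^ (m.choose 2) * ‖z‖ ^ m))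
    · exact (summable_choose_pow hq0 hq (norm_nonneg z)).mul_left _
    · intro m
      have tN : Tendsto (fun N : ℕ => qPoch q q N) atTop (𝓝 L) := tendsto_qPoch hq q (hPq hq)
      have tNm : Tendsto (fun N : ℕ => qPoch q q (N - m)) atTop (𝓝 L) :=
        tN.comp (tendsto_sub_atTop_nat m)
      have tB : Tendsto (fun N : ℕ => qPoch q q N / (qPoch q q m * qPoch q q (N - m)))
          atTop (𝓝 (L / (qPoch q q m * L))) :=
        tN.div (tendsto_const_nhds.mul tNm) (mul_ne_zero (hP m) hL)
      have tB2 := tB.mul_const ((-1 : ℂ)^m * q ^ (m.choose 2) * z ^ m)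
      have heq : L / (qPoch q q m * L) * ((-1 : ℂ)^m * q ^ (m.choose 2) * z ^ m)
          = (-1 : ℂ)^m * q ^ (m.choose 2) * z ^ m / qPoch q q m := by
        rw [div_mul_eq_mul_div, mul_comm (qPoch q q m) L, mul_div_mul_left _ _ hL]
      rw [heq] at tB2
      apply tB2.congr'
      filter_upwards [eventually_ge_atTop m] with N hN
      simp only [hgdef]
      rw [if_pos hN]
    · apply Eventually.of_forall
      intro N m
      simp only [hgdef]
      by_cases hm : m ≤ N
      · rw [if_pos hm]
        have hnorm : ‖qPoch q q N / (qPoch q q m * qPoch q q (N - m)) *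
            ((-1 : ℂ)^m * q ^ (m.choose 2) * z ^ m)‖
            = ‖qPoch q q N‖ / (‖qPoch q q m‖ * ‖qPoch q q (N - m)‖) *
              (‖q‖ ^ (m.choose 2) * ‖z‖ ^ m) := by
          rw [norm_mul, norm_div, norm_mul, norm_mul, norm_mul, norm_pow, norm_pow, norm_pow]
          simp [norm_neg]
        rw [hnorm]
        have h1 : ‖qPoch q q N‖ ≤ Bq := norm_qPoch_le hq q N
        have h2 : c0 ≤ ‖qPoch q q m‖ := norm_qPochQ_ge hq m
        have h3 : c0 ≤ ‖qPoch q q (N - m)‖ := norm_qPochQ_ge hq (N - m)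
        have h4 : 0 ≤ ‖q‖ ^ (m.choose 2) * ‖z‖ ^ m :=
          mul_nonneg (pow_nonneg hq0 _) (pow_nonneg (norm_nonneg z) _)
        apply mul_le_mul_of_nonneg_right ?_ h4
        apply div_le_div₀ (by positivity) h1 (by positivity)
        exact mul_le_mul h2 h3 hc0.le (norm_nonneg _)
      · rw [if_neg hm, norm_zero]
        positivity
  have key2 : ∀ N : ℕ, ∑' m, g N m = qPoch z q N := by
    intro N
    have h1 : ∑' m, g N m = ∑ m ∈ Finset.range (N+1), g N m := by
      apply tsum_eq_sum
      intro m hm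
      rw [Finset.mem_range, not_lt] at hm
      simp only [hgdef]
      rw [if_neg (by omega)]
    rw [h1, qbinom hq z N]
    refine Finset.sum_congr rfl fun m hm => ?_
    have hm2 : m ≤ N := by
      have := Finset.mem_range.1 hm; omega
    simp only [hgdef]
    rw [if_pos hm2]
  have t2 : Tendsto (fun N => qPoch z q N) atTop (𝓝 (qPochInf z q)) := tendsto_qPoch hq z hz
  have t1 : Tendsto (fun N => qPoch z q N) atTop
      (𝓝 (∑' m, (-1 : ℂ)^m * q ^ (m.choose 2) * z ^ m / qPoch q q m)) :=
    key.congr key2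
  exact tendsto_nhds_unique t1 t2

def auxg : ℕ × ℕ × ℕ → (ℕ × ℕ) × ℕ := fun t => ((t.1 + t.2.1, t.2.2), t.1)

def tripleSwap : (ℕ × ℕ × ℕ) ≃ (ℕ × ℕ × ℕ) :=
  ⟨fun t => (t.2.2, t.2.1, t.1), fun t => (t.2.2, t.2.1, t.1), fun _ => rfl, fun _ => rfl⟩

set_option maxHeartbeats 1000000 in
theorem stmt_1 (x y q : ℂ) (hq : ‖q‖ < 1)
    (hxy : ∀ k : ℕ, x ^ 2 * y * q ^ k ≠ 1) :
    (∑' t : ℕ × ℕ × ℕ,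
        q ^ (Nat.choose t.2.2 2 + Nat.choose (t.1 + t.2.1 + t.2.2) 2) *
          (-1 : ℂ) ^ (t.1 + t.2.1) * x ^ (2 * t.1 + 2 * t.2.2 + t.2.1) *
          y ^ (2 * t.2.1 + 2 * t.2.2 + t.1) /
          (qPoch q q t.1 * qPoch q q t.2.1 * qPoch q q t.2.2))
      = qPochInf (x ^ 2 * y) q *
        ∑' k : ℕ,
          qPoch x q k * (-1 : ℂ) ^ k * q ^ (Nat.choose k 2) * (x * y ^ 2) ^ k /
            (qPoch q q k * qPoch (x ^ 2 * y) q k) := by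
  have hq0 : (0:ℝ) ≤ ‖q‖ := norm_nonneg q
  have hP : ∀ m : ℕ, qPoch q q m ≠ 0 := qPoch_q_ne_zero hq
  have hA : ∀ k : ℕ, 1 - (x^2*y) * q^k ≠ 0 := fun k h => hxy k (by linear_combination -h)
  have hR : ∀ k : ℕ, qPoch (x^2*y) q k ≠ 0 := fun k =>
    Finset.prod_ne_zero_iff.2 fun j _ => hA j
  have hz : ∀ k j : ℕ, 1 - ((x^2*y) * q^k) * q^j ≠ 0 := by
    intro k j
    have := hA (k+j)
    rwa [pow_add, ← mul_assoc] at this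
  set T : ℕ × ℕ × ℕ → ℂ := fun t =>
    q ^ (Nat.choose t.2.2 2 + Nat.choose (t.1 + t.2.1 + t.2.2) 2) *
      (-1 : ℂ) ^ (t.1 + t.2.1) * x ^ (2 * t.1 + 2 * t.2.2 + t.2.1) *
      y ^ (2 * t.2.1 + 2 * t.2.2 + t.1) /
      (qPoch q q t.1 * qPoch q q t.2.1 * qPoch q q t.2.2) with hTdef
  set H : (ℕ × ℕ) × ℕ → ℂ := fun p =>
    if p.2 ≤ p.1.1 then
      (-1:ℂ)^(p.2 + p.1.1 + p.1.2) *
        q^(p.2.choose 2 + p.1.1.choose 2 + p.1.2.choose 2 + p.1.1*p.1.2) *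
        x^p.2 * (x*y^2)^p.1.1 * (x^2*y)^p.1.2 /
        (qPoch q q p.2 * qPoch q q (p.1.1 - p.2) * qPoch q q p.1.2)
    else 0 with hHdef
  set c0 : ℝ := Real.exp (-(‖q‖ / (1 - ‖q‖) / (1 - ‖q‖))) with hc0def
  have hc0 : 0 < c0 := Real.exp_pos _
  have hPc0 : ∀ m : ℕ, c0 ≤ ‖qPoch q q m‖ := norm_qPochQ_ge hq
  have key1 : ∀ i j m : ℕ, H ((i+j, m), i) = T (m, j, i) := by
    intro i j m
    simp only [hHdef, hTdef]
    rw [if_pos (Nat.le_add_right i j)]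
    have e1 : (i+j) - i = j := by omega
    have h3 : (m+j+i) = (i+j)+m := by omega
    have e2 : i.choose 2 + (i+j).choose 2 + m.choose 2 + (i+j)*m
        = i.choose 2 + (m+j+i).choose 2 := by
      rw [h3, choose_two_add (i+j) m]
      ring
    have e3 : ((-1:ℂ))^(i+(i+j)+m) = (-1:ℂ)^(m+j) := by
      have h4 : i+(i+j)+m = 2*i + (m+j) := by omega
      rw [h4, pow_add, pow_mul]
      norm_num
    rw [e1, e2, e3]
    ring
  have hgT : ∀ t : ℕ × ℕ × ℕ, H (auxg t) = T (tripleSwap t) := fun t => key1 t.1 t.2.1 t.2.2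
  have ginj : Function.Injective auxg := by
    rintro ⟨i1, j1, m1⟩ ⟨i2, j2, m2⟩ h
    simp only [auxg, Prod.mk.injEq] at h
    obtain ⟨⟨h1, h2⟩, h3⟩ := h
    simp only [Prod.mk.injEq]
    omega
  have key2 : ∀ p, p ∉ Set.range auxg → H p = 0 := by
    rintro ⟨⟨k, m⟩, i⟩ hp
    by_cases h : i ≤ k
    · exfalso
      refine hp ⟨(i, k - i, m), ?_⟩
      show ((i + (k - i), m), i) = ((k, m), i)
      have hik : i + (k - i) = k := by omega
      rw [hik]
    · simp only [hHdef]
      rw [if_neg h]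
  have hT : Summable T := by
    have hb : Summable (fun t : ℕ × ℕ × ℕ =>
        ((‖q‖^(t.1.choose 2) * (‖x‖^2*‖y‖)^t.1) *
          ((‖q‖^(t.2.1.choose 2) * (‖x‖*‖y‖^2)^t.2.1) *
           (‖q‖^(t.2.2.choose 2) * (‖x‖^2*‖y‖^2)^t.2.2))) / (c0*c0*c0)) := by
      apply Summable.div_const
      have hf : Summable (fun a : ℕ => ‖q‖^(a.choose 2) * (‖x‖^2*‖y‖)^a) :=
        summable_choose_pow hq0 hq (by positivity)
      have hgg : Summable (fun a : ℕ => ‖q‖^(a.choose 2) * (‖x‖*‖y‖^2)^a) :=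
        summable_choose_pow hq0 hq (by positivity)
      have hh : Summable (fun a : ℕ => ‖q‖^(a.choose 2) * (‖x‖^2*‖y‖^2)^a) :=
        summable_choose_pow hq0 hq (by positivity)
      have hgh := hgg.mul_of_nonneg hh (fun a => by positivity) (fun a => by positivity)
      exact hf.mul_of_nonneg hgh (fun a => by positivity) (fun a => by positivity)
    apply Summable.of_norm_bounded hb
    rintro ⟨i, j, k⟩
    have hnorm : ‖T (i,j,k)‖ = ‖q‖^(k.choose 2 + (i+j+k).choose 2) * ‖x‖^(2*i+2*k+j) *
        ‖y‖^(2*j+2*k+i) / (‖qPoch q q i‖ * ‖qPoch q q j‖ * ‖qPoch q q k‖) := by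
      simp only [hTdef, norm_div, norm_mul, norm_pow, norm_neg, norm_one, one_pow, mul_one]
    rw [hnorm]
    apply div_le_div₀ (by positivity) ?_ (by positivity) ?_
    · calc ‖q‖^(k.choose 2+(i+j+k).choose 2) * ‖x‖^(2*i+2*k+j) * ‖y‖^(2*j+2*k+i)
          ≤ (‖q‖^(i.choose 2) * (‖q‖^(j.choose 2) * ‖q‖^(k.choose 2))) * ‖x‖^(2*i+2*k+j) *
            ‖y‖^(2*j+2*k+i) := by
            apply mul_le_mul_of_nonneg_right (mul_le_mul_of_nonneg_right ?_ (by positivity))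
              (by positivity)
            rw [← pow_add, ← pow_add]
            apply pow_le_pow_of_le_one hq0 hq.le
            have h6 : ((i+j)+k).choose 2 = (i+j).choose 2 + k.choose 2 + (i+j)*k :=
              choose_two_add (i+j) k
            have h7 : (i+j).choose 2 = i.choose 2 + j.choose 2 + i*j := choose_two_add i j
            omega
      _ = ‖q‖^(i.choose 2) * (‖x‖^2*‖y‖)^i *
            ((‖q‖^(j.choose 2) * (‖x‖*‖y‖^2)^j) * (‖q‖^(k.choose 2) * (‖x‖^2*‖y‖^2)^k)) := by
            ring
    · exact mul_le_mul (mul_le_mul (hPc0 i) (hPc0 j) hc0.le (norm_nonneg _)) (hPc0 k)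
        hc0.le (by positivity)
  have hH : Summable H := by
    refine (ginj.summable_iff key2).mp ?_
    have h5 : Summable (fun t : ℕ × ℕ × ℕ => T (tripleSwap t)) :=
      tripleSwap.summable_iff.mpr hT
    exact h5.congr fun t => (hgT t).symm
  have key3 : ∀ k m : ℕ, (∑' i : ℕ, H ((k, m), i)) =
      qPoch x q k * (((-1:ℂ)^k * q^(k.choose 2) * (x*y^2)^k / qPoch q q k) *
        ((-1:ℂ)^m * q^(m.choose 2) * ((x^2*y)*q^k)^m / qPoch q q m)) := by
    intro k m
    have h1 : (∑' i : ℕ, H ((k,m),i)) = ∑ i ∈ Finset.range (k+1), H ((k,m),i) := by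
      apply tsum_eq_sum
      intro i hi
      rw [Finset.mem_range, not_lt] at hi
      simp only [hHdef]
      rw [if_neg (by omega)]
    have h2 : ∀ i ∈ Finset.range (k+1), H ((k,m),i) =
        (qPoch q q k / (qPoch q q i * qPoch q q (k-i)) * ((-1:ℂ)^i * q^(i.choose 2) * x^i)) *
        (((-1:ℂ)^k * q^(k.choose 2) * (x*y^2)^k / qPoch q q k) *
          ((-1:ℂ)^m * q^(m.choose 2) * ((x^2*y)*q^k)^m / qPoch q q m)) := by
      intro i hi
      have hik : i ≤ k := by rw [Finset.mem_range] at hi; omega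
      simp only [hHdef]
      rw [if_pos hik]
      field_simp [hP i, hP (k-i), hP m, hP k]
      ring
    rw [h1, Finset.sum_congr rfl h2, ← Finset.sum_mul, ← qbinom hq x k]
  have key4 : ∀ k : ℕ,
      qPochInf (x^2*y) q *
        (qPoch x q k * (-1 : ℂ) ^ k * q ^ (Nat.choose k 2) * (x * y ^ 2) ^ k /
          (qPoch q q k * qPoch (x ^ 2 * y) q k))
      = qPoch x q k * (((-1:ℂ)^k * q^(k.choose 2) * (x*y^2)^k / qPoch q q k) *
          qPochInf ((x^2*y)*q^k) q) := by
    intro k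
    rw [qPochInf_split hq (x^2*y) hA k]
    field_simp [hP k, hR k]
  calc (∑' t : ℕ × ℕ × ℕ, T t)
      = ∑' t : ℕ × ℕ × ℕ, T (tripleSwap t) := (tripleSwap.tsum_eq T).symm
    _ = ∑' t : ℕ × ℕ × ℕ, H (auxg t) := tsum_congr fun t => (hgT t).symm
    _ = ∑' p : (ℕ × ℕ) × ℕ, H p := by
        apply ginj.tsum_eq
        intro p hp
        by_contra hc
        exact hp (key2 p hc)
    _ = ∑' km : ℕ × ℕ, ∑' i : ℕ, H (km, i) := Summable.tsum_prod hH
    _ = ∑' km : ℕ × ℕ, qPoch x q km.1 *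
          (((-1:ℂ)^km.1 * q^(km.1.choose 2) * (x*y^2)^km.1 / qPoch q q km.1) *
            ((-1:ℂ)^km.2 * q^(km.2.choose 2) * ((x^2*y)*q^km.1)^km.2 / qPoch q q km.2)) :=
        tsum_congr fun km => key3 km.1 km.2
    _ = ∑' k : ℕ, ∑' m : ℕ, qPoch x q k *
          (((-1:ℂ)^k * q^(k.choose 2) * (x*y^2)^k / qPoch q q k) *
            ((-1:ℂ)^m * q^(m.choose 2) * ((x^2*y)*q^k)^m / qPoch q q m)) := by
        refine Summable.tsum_prod ?_
        exact (hH.prod).congr fun km => key3 km.1 km.2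
    _ = ∑' k : ℕ, qPoch x q k *
          (((-1:ℂ)^k * q^(k.choose 2) * (x*y^2)^k / qPoch q q k) *
            qPochInf ((x^2*y)*q^k) q) := by
        refine tsum_congr fun k => ?_
        rw [tsum_mul_left, tsum_mul_left, euler_tsum hq ((x^2*y)*q^k) (hz k)]
    _ = ∑' k : ℕ, qPochInf (x^2*y) q *
          (qPoch x q k * (-1 : ℂ) ^ k * q ^ (Nat.choose k 2) * (x * y ^ 2) ^ k /
            (qPoch q q k * qPoch (x ^ 2 * y) q k)) := tsum_congr fun k => (key4 k).symm
    _ = qPochInf (x^2*y) q *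
          ∑' k : ℕ, qPoch x q k * (-1 : ℂ) ^ k * q ^ (Nat.choose k 2) * (x * y ^ 2) ^ k /
            (qPoch q q k * qPoch (x ^ 2 * y) q k) := tsum_mul_left
end

section
/- Let x, q be complex numbers with |q| < 1. Then Σ_{i,j≥0} (−1)^j · x^(i+j) · q^(i²+2ij+j²) / ((q⁸;q⁸)_i · (q⁸;q⁸)_j) = Σ_{n≥0} x^(2n) · q^(4n²) / (q¹⁶;q¹⁶)_n. -/
namespace Stmt8Aux

open Finset Finset.Nat

noncomputable def P (Q : ℂ) (n : ℕ) : ℂ := qPoch Q Q n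

lemma P_zero (Q : ℂ) : P Q 0 = 1 := by simp [P, qPoch]

lemma P_succ (Q : ℂ) (n : ℕ) : P Q (n + 1) = P Q n * (1 - Q ^ (n + 1)) := by
  unfold P qPoch
  rw [Finset.prod_range_succ, pow_succ]
  ring

lemma one_sub_pow_ne {Q : ℂ} (hQ : ‖Q‖ < 1) (k : ℕ) : (1 : ℂ) - Q ^ (k + 1) ≠ 0 := by
  intro h
  have h1 : Q ^ (k + 1) = 1 := by linear_combination -h
  have h2 : ‖Q ^ (k + 1)‖ < 1 := by
    rw [norm_pow]
    exact pow_lt_one₀ (norm_nonneg _) hQ (Nat.succ_ne_zero k)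
  rw [h1, norm_one] at h2
  exact lt_irrefl _ h2

lemma P_ne_zero {Q : ℂ} (hQ : ‖Q‖ < 1) (n : ℕ) : P Q n ≠ 0 := by
  induction n with
  | zero => simp [P_zero]
  | succ n ih => rw [P_succ]; exact mul_ne_zero ih (one_sub_pow_ne hQ n)

noncomputable def B (Q : ℂ) (i j : ℕ) : ℂ := P Q (i + j) / (P Q i * P Q j)

lemma B_zero_left {Q : ℂ} (hQ : ‖Q‖ < 1) (j : ℕ) : B Q 0 j = 1 := by
  simp [B, P_zero, div_self (P_ne_zero hQ j)]

lemma B_zero_right {Q : ℂ} (hQ : ‖Q‖ < 1) (i : ℕ) : B Q i 0 = 1 := by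
  simp [B, P_zero, div_self (P_ne_zero hQ i)]

lemma rec1 {Q : ℂ} (hQ : ‖Q‖ < 1) (i j : ℕ) :
    B Q (i + 1) (j + 1) = B Q (i + 1) j + Q ^ (j + 1) * B Q i (j + 1) := by
  have h2 : (i + 1) + (j + 1) = (i + j + 1) + 1 := by omega
  have h3 : (i + 1) + j = (i + j) + 1 := by omega
  have h4 : i + (j + 1) = (i + j) + 1 := by omega
  have hab : Q ^ (i + j + 1 + 1) = Q ^ (i + 1) * Q ^ (j + 1) := by
    rw [← pow_add]; congr 1; omega
  unfold B
  rw [h2, h3, h4, P_succ Q (i + j + 1), P_succ Q (i + j), P_succ Q i, P_succ Q j, hab]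
  have hi := P_ne_zero hQ i
  have hj := P_ne_zero hQ j
  have hn := P_ne_zero hQ (i + j)
  have hi1 : (1 : ℂ) - Q ^ (i + 1) ≠ 0 := one_sub_pow_ne hQ i
  have hj1 : (1 : ℂ) - Q ^ (j + 1) ≠ 0 := one_sub_pow_ne hQ j
  field_simp
  ring

lemma rec2 {Q : ℂ} (hQ : ‖Q‖ < 1) (i j : ℕ) :
    B Q (i + 1) (j + 1) = Q ^ (i + 1) * B Q (i + 1) j + B Q i (j + 1) := by
  have h2 : (i + 1) + (j + 1) = (i + j + 1) + 1 := by omega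
  have h3 : (i + 1) + j = (i + j) + 1 := by omega
  have h4 : i + (j + 1) = (i + j) + 1 := by omega
  have hab : Q ^ (i + j + 1 + 1) = Q ^ (i + 1) * Q ^ (j + 1) := by
    rw [← pow_add]; congr 1; omega
  unfold B
  rw [h2, h3, h4, P_succ Q (i + j + 1), P_succ Q (i + j), P_succ Q i, P_succ Q j, hab]
  have hi := P_ne_zero hQ i
  have hj := P_ne_zero hQ j
  have hn := P_ne_zero hQ (i + j)
  have hi1 : (1 : ℂ) - Q ^ (i + 1) ≠ 0 := one_sub_pow_ne hQ i
  have hj1 : (1 : ℂ) - Q ^ (j + 1) ≠ 0 := one_sub_pow_ne hQ j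
  field_simp
  ring


noncomputable def A (Q : ℂ) (n : ℕ) : ℂ :=
  ∑ p ∈ antidiagonal n, (-1 : ℂ) ^ p.2 * B Q p.1 p.2

noncomputable def C (Q : ℂ) (n : ℕ) : ℂ :=
  ∑ p ∈ antidiagonal n, (-1 : ℂ) ^ p.2 * Q ^ p.2 * B Q p.1 p.2

noncomputable def Am (Q : ℂ) (n : ℕ) : ℂ :=
  ∑ p ∈ antidiagonal n, (-1 : ℂ) ^ p.2 * B Q p.1 (p.2 + 1)

noncomputable def Ap (Q : ℂ) (n : ℕ) : ℂ :=
  ∑ p ∈ antidiagonal n, (-1 : ℂ) ^ p.2 * B Q (p.1 + 1) p.2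

noncomputable def Cm (Q : ℂ) (n : ℕ) : ℂ :=
  ∑ p ∈ antidiagonal n, (-1 : ℂ) ^ p.2 * Q ^ p.2 * B Q p.1 (p.2 + 1)

noncomputable def W (Q : ℂ) (n : ℕ) : ℂ :=
  ∑ p ∈ antidiagonal n, (-1 : ℂ) ^ p.2 * B Q (p.1 + 1) (p.2 + 1)

variable {Q : ℂ}

lemma A_zero : A Q 0 = 1 := by simp [A, B, P_zero]

lemma C_zero : C Q 0 = 1 := by simp [C, B, P_zero]

lemma A_succ (hQ : ‖Q‖ < 1) (n : ℕ) : A Q (n + 1) = 1 - Am Q n := by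
  rw [A, Finset.Nat.sum_antidiagonal_succ' (f := fun p => (-1 : ℂ) ^ p.2 * B Q p.1 p.2)]
  rw [B_zero_right hQ, Am, sub_eq_add_neg, ← Finset.sum_neg_distrib]
  rw [pow_zero, mul_one]
  exact congrArg _ (Finset.sum_congr rfl fun p _ => by ring)

lemma A_succ' (hQ : ‖Q‖ < 1) (n : ℕ) : A Q (n + 1) = (-1) ^ (n + 1) + Ap Q n := by
  rw [A, Finset.Nat.sum_antidiagonal_succ (f := fun p => (-1 : ℂ) ^ p.2 * B Q p.1 p.2)]
  rw [B_zero_left hQ, Ap, mul_one]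

lemma C_succ (hQ : ‖Q‖ < 1) (n : ℕ) : C Q (n + 1) = 1 - Q * Cm Q n := by
  rw [C, Finset.Nat.sum_antidiagonal_succ' (f := fun p => (-1 : ℂ) ^ p.2 * Q ^ p.2 * B Q p.1 p.2)]
  rw [B_zero_right hQ, Cm, Finset.mul_sum, sub_eq_add_neg, ← Finset.sum_neg_distrib]
  rw [pow_zero, pow_zero, mul_one, mul_one]
  exact congrArg _ (Finset.sum_congr rfl fun p _ => by ring)

lemma W_eq1 (hQ : ‖Q‖ < 1) (n : ℕ) : W Q n = Ap Q n + Q * Cm Q n := by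
  rw [W, Ap, Cm, Finset.mul_sum, ← Finset.sum_add_distrib]
  refine Finset.sum_congr rfl fun p _ => ?_
  rw [rec1 hQ p.1 p.2]
  ring

lemma Wg (hQ : ‖Q‖ < 1) (n : ℕ) :
    (∑ p ∈ antidiagonal n, (-1 : ℂ) ^ p.2 * Q ^ p.2 * B Q (p.1 + 1) (p.2 + 1))
      = Q ^ (n + 1) * Ap Q n + Cm Q n := by
  rw [Ap, Cm, Finset.mul_sum, ← Finset.sum_add_distrib]
  refine Finset.sum_congr rfl fun p hp => ?_
  have hmem : p.1 + p.2 = n := Finset.HasAntidiagonal.mem_antidiagonal.mp hp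
  have hpow : Q ^ (n + 1) = Q ^ p.2 * Q ^ (p.1 + 1) := by
    rw [← pow_add]; congr 1; omega
  rw [rec2 hQ p.1 p.2, hpow]
  ring

lemma A_succ2 (hQ : ‖Q‖ < 1) (n : ℕ) :
    A Q (n + 2) = (-1) ^ n + 1 - W Q n := by
  rw [A, Finset.Nat.sum_antidiagonal_succ (f := fun p => (-1 : ℂ) ^ p.2 * B Q p.1 p.2)]
  rw [Finset.Nat.sum_antidiagonal_succ' (f := fun p => (-1 : ℂ) ^ p.2 * B Q (p.1 + 1) p.2)]
  rw [B_zero_left hQ, B_zero_right hQ, W]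
  have hs : (∑ p ∈ antidiagonal n, (-1 : ℂ) ^ (p.2 + 1) * B Q (p.1 + 1) (p.2 + 1))
      = ∑ p ∈ antidiagonal n, -((-1 : ℂ) ^ p.2 * B Q (p.1 + 1) (p.2 + 1)) :=
    Finset.sum_congr rfl fun p _ => by ring
  rw [hs, Finset.sum_neg_distrib]
  ring

lemma C_succ2 (hQ : ‖Q‖ < 1) (n : ℕ) :
    C Q (n + 2) = (-1) ^ n * Q ^ (n + 2) + 1 - Q * (Q ^ (n + 1) * Ap Q n + Cm Q n) := by
  rw [C, Finset.Nat.sum_antidiagonal_succ (f := fun p => (-1 : ℂ) ^ p.2 * Q ^ p.2 * B Q p.1 p.2)]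
  rw [Finset.Nat.sum_antidiagonal_succ'
    (f := fun p => (-1 : ℂ) ^ p.2 * Q ^ p.2 * B Q (p.1 + 1) p.2)]
  rw [B_zero_left hQ, B_zero_right hQ, ← Wg hQ n]
  have hs : (∑ p ∈ antidiagonal n, (-1 : ℂ) ^ (p.2 + 1) * Q ^ (p.2 + 1) * B Q (p.1 + 1) (p.2 + 1))
      = ∑ p ∈ antidiagonal n, -(Q * ((-1 : ℂ) ^ p.2 * Q ^ p.2 * B Q (p.1 + 1) (p.2 + 1))) :=
    Finset.sum_congr rfl fun p _ => by ring
  rw [hs, Finset.sum_neg_distrib, ← Finset.mul_sum]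
  ring

lemma R1 (hQ : ‖Q‖ < 1) : ∀ n, A Q (n + 1) = C Q n - A Q n := by
  intro n
  match n with
  | 0 =>
    have h1 : Am Q 0 = 1 := by simp [Am, B_zero_left hQ]
    rw [A_succ hQ, h1, C_zero, A_zero]
  | n + 1 =>
    have h1 := A_succ2 hQ n
    have h2 := W_eq1 hQ n
    have h3 := A_succ' hQ n
    have h4 := C_succ hQ n
    linear_combination h1 - h2 + h3 - h4

lemma R2 (hQ : ‖Q‖ < 1) : ∀ n, C Q (n + 1) = C Q n - Q ^ (n + 1) * A Q n := by
  intro n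
  match n with
  | 0 =>
    have h1 : Cm Q 0 = 1 := by simp [Cm, B_zero_left hQ]
    rw [C_succ hQ, h1, C_zero, A_zero]; ring
  | n + 1 =>
    have h1 := C_succ2 hQ n
    have h2 := A_succ' hQ n
    have h3 := C_succ hQ n
    linear_combination h1 + Q ^ (n + 2) * h2 - h3

lemma A_key (hQ : ‖Q‖ < 1) (n : ℕ) : A Q (n + 2) = (1 - Q ^ (n + 1)) * A Q n := by
  have h1 := R1 hQ (n + 1)
  have h2 := R2 hQ n
  have h3 := R1 hQ n
  linear_combination h1 + h2 - h3


noncomputable def G (Q : ℂ) (m : ℕ) : ℂ := ∏ k ∈ Finset.range m, (1 - Q ^ (2 * k + 1))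

lemma A_even (hQ : ‖Q‖ < 1) : ∀ m, A Q (2 * m) = G Q m
  | 0 => by simp [A_zero, G]
  | m + 1 => by
    have h : 2 * (m + 1) = 2 * m + 2 := by omega
    rw [h, A_key hQ (2 * m), A_even hQ m]
    simp only [G, Finset.prod_range_succ]
    ring

lemma A_odd (hQ : ‖Q‖ < 1) : ∀ m, A Q (2 * m + 1) = 0
  | 0 => by
    have h1 : Am Q 0 = 1 := by simp [Am, B_zero_left hQ]
    have := A_succ hQ 0
    rw [h1] at this
    simpa using this
  | m + 1 => by
    have h : 2 * (m + 1) + 1 = (2 * m + 1) + 2 := by omega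
    rw [h, A_key hQ (2 * m + 1), A_odd hQ m, mul_zero]

lemma G_ne_zero (hQ : ‖Q‖ < 1) (m : ℕ) : G Q m ≠ 0 := by
  rw [G]
  exact Finset.prod_ne_zero_iff.mpr fun k _ => one_sub_pow_ne hQ (2 * k)

lemma P_even : ∀ m, P Q (2 * m) = G Q m * qPoch (Q ^ 2) (Q ^ 2) m
  | 0 => by simp [P_zero, G, qPoch]
  | m + 1 => by
    have h : 2 * (m + 1) = (2 * m + 1) + 1 := by omega
    have hq2 : Q ^ 2 * (Q ^ 2) ^ m = Q ^ (2 * m + 1 + 1) := by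
      rw [← pow_succ', ← pow_mul, h]
    rw [h, P_succ, P_succ, P_even m]
    simp only [G, qPoch, Finset.prod_range_succ, hq2]
    ring

noncomputable def term (x q : ℂ) (p : ℕ × ℕ) : ℂ :=
  (-1 : ℂ) ^ p.2 * x ^ (p.1 + p.2) * q ^ (p.1 ^ 2 + 2 * p.1 * p.2 + p.2 ^ 2) /
    (qPoch (q ^ 8) (q ^ 8) p.1 * qPoch (q ^ 8) (q ^ 8) p.2)

noncomputable def S (x q : ℂ) (n : ℕ) : ℂ := ∑ p ∈ antidiagonal n, term x q p

lemma hq8 {q : ℂ} (hq : ‖q‖ < 1) : ‖q ^ 8‖ < 1 := by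
  rw [norm_pow]
  exact pow_lt_one₀ (norm_nonneg q) hq (by norm_num)

lemma inner_eval (x q : ℂ) (hq : ‖q‖ < 1) (n : ℕ) :
    S x q n = x ^ n * q ^ (n ^ 2) * (A (q ^ 8) n / P (q ^ 8) n) := by
  have hQ := hq8 hq
  rw [S, A, Finset.sum_div, Finset.mul_sum]
  refine Finset.sum_congr rfl fun p hp => ?_
  obtain ⟨i, j⟩ := p
  have hmem : i + j = n := Finset.HasAntidiagonal.mem_antidiagonal.mp hp
  subst hmem
  have hij : i ^ 2 + 2 * i * j + j ^ 2 = (i + j) ^ 2 := by ring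
  rw [term, B, hij]
  have hi := P_ne_zero hQ i
  have hj := P_ne_zero hQ j
  have hn := P_ne_zero hQ (i + j)
  simp only [P] at hi hj hn ⊢
  field_simp

lemma q16 (q : ℂ) : (q ^ 8) ^ 2 = q ^ 16 := by rw [← pow_mul]

lemma inner_even (x q : ℂ) (hq : ‖q‖ < 1) (m : ℕ) :
    S x q (2 * m) = x ^ (2 * m) * q ^ (4 * m ^ 2) / qPoch (q ^ 16) (q ^ 16) m := by
  have hQ := hq8 hq
  rw [inner_eval x q hq, A_even hQ m, P_even m, q16]
  have hG := G_ne_zero hQ m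
  have hq16 : ‖q ^ 16‖ < 1 := by
    rw [norm_pow]
    exact pow_lt_one₀ (norm_nonneg q) hq (by norm_num)
  have hR := P_ne_zero hq16 m
  simp only [P] at hR
  have h4 : (2 * m) ^ 2 = 4 * m ^ 2 := by ring
  rw [h4]
  field_simp

lemma inner_odd (x q : ℂ) (hq : ‖q‖ < 1) (m : ℕ) : S x q (2 * m + 1) = 0 := by
  rw [inner_eval x q hq, A_odd (hq8 hq) m]
  simp


lemma P_lower {Q : ℂ} (hQ : ‖Q‖ < 1) : ∀ n, (1 - ‖Q‖) ^ n ≤ ‖P Q n‖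
  | 0 => by simp [P_zero]
  | n + 1 => by
    rw [P_succ, pow_succ, norm_mul]
    have h1 : 1 - ‖Q‖ ≤ ‖1 - Q ^ (n + 1)‖ := by
      have h := norm_sub_norm_le (1 : ℂ) (Q ^ (n + 1))
      rw [norm_one, norm_pow] at h
      have h2 : ‖Q‖ ^ (n + 1) ≤ ‖Q‖ := pow_le_of_le_one (norm_nonneg Q) hQ.le (by omega)
      linarith
    have h0 : (0 : ℝ) ≤ 1 - ‖Q‖ := by linarith
    exact mul_le_mul (P_lower hQ n) h1 h0 (norm_nonneg _)

lemma summable_u {c r : ℝ} (hc : 0 ≤ c) (hr0 : 0 ≤ r) (hr : r < 1) :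
    Summable (fun n : ℕ => c ^ n * r ^ (n ^ 2)) := by
  apply summable_of_ratio_norm_eventually_le (r := 1 / 2) (by norm_num)
  have ht : Filter.Tendsto (fun n : ℕ => c * r ^ n) Filter.atTop (nhds 0) := by
    simpa using (tendsto_pow_atTop_nhds_zero_of_lt_one hr0 hr).const_mul c
  have hev : ∀ᶠ n : ℕ in Filter.atTop, c * r ^ n ≤ 1 / 2 :=
    ht.eventually_le_const (by norm_num : (0 : ℝ) < 1 / 2)
  filter_upwards [hev] with n hn
  have he : (n + 1) ^ 2 = n ^ 2 + (2 * n + 1) := by ring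
  have key : c ^ (n + 1) * r ^ ((n + 1) ^ 2)
      = (c ^ n * r ^ (n ^ 2)) * (c * r ^ (2 * n + 1)) := by
    rw [he, pow_add, pow_succ]; ring
  have hb : c * r ^ (2 * n + 1) ≤ 1 / 2 := by
    have : r ^ (2 * n + 1) ≤ r ^ n := pow_le_pow_of_le_one hr0 hr.le (by omega)
    nlinarith
  rw [Real.norm_of_nonneg (by positivity), Real.norm_of_nonneg (by positivity), key]
  calc (c ^ n * r ^ (n ^ 2)) * (c * r ^ (2 * n + 1))
      ≤ (c ^ n * r ^ (n ^ 2)) * (1 / 2) := by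
        apply mul_le_mul_of_nonneg_left hb (by positivity)
    _ = 1 / 2 * (c ^ n * r ^ (n ^ 2)) := by ring

noncomputable def u (x q : ℂ) (n : ℕ) : ℝ :=
  ((1 - ‖q ^ 8‖)⁻¹ * ‖x‖) ^ n * ‖q‖ ^ (n ^ 2)

lemma term_bound (x q : ℂ) (hq : ‖q‖ < 1) (p : ℕ × ℕ) :
    ‖term x q p‖ ≤ u x q p.1 * u x q p.2 := by
  obtain ⟨i, j⟩ := p
  have hQ := hq8 hq
  have h1t : (0 : ℝ) < 1 - ‖q ^ 8‖ := by linarith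
  have hPi := P_lower hQ i
  have hPj := P_lower hQ j
  have hnorm : ‖term x q (i, j)‖
      = ‖x‖ ^ (i + j) * ‖q‖ ^ (i ^ 2 + 2 * i * j + j ^ 2) / (‖P (q ^ 8) i‖ * ‖P (q ^ 8) j‖) := by
    rw [term]
    simp only [P]
    rw [norm_div, norm_mul, norm_mul, norm_mul, norm_pow, norm_pow, norm_pow,
      norm_neg, norm_one, one_pow, one_mul]
  rw [hnorm]
  have hexp : i ^ 2 + j ^ 2 ≤ i ^ 2 + 2 * i * j + j ^ 2 := by
    have h : i ^ 2 + 2 * i * j + j ^ 2 = (i ^ 2 + j ^ 2) + 2 * i * j := by ring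
    rw [h]; exact Nat.le_add_right _ _
  have hnum : ‖x‖ ^ (i + j) * ‖q‖ ^ (i ^ 2 + 2 * i * j + j ^ 2)
      ≤ ‖x‖ ^ (i + j) * ‖q‖ ^ (i ^ 2 + j ^ 2) := by
    apply mul_le_mul_of_nonneg_left _ (by positivity)
    exact pow_le_pow_of_le_one (norm_nonneg q) hq.le hexp
  have hden : (1 - ‖q ^ 8‖) ^ i * (1 - ‖q ^ 8‖) ^ j ≤ ‖P (q ^ 8) i‖ * ‖P (q ^ 8) j‖ :=
    mul_le_mul hPi hPj (by positivity) (norm_nonneg _)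
  have hdpos : (0 : ℝ) < (1 - ‖q ^ 8‖) ^ i * (1 - ‖q ^ 8‖) ^ j := by positivity
  calc ‖x‖ ^ (i + j) * ‖q‖ ^ (i ^ 2 + 2 * i * j + j ^ 2) / (‖P (q ^ 8) i‖ * ‖P (q ^ 8) j‖)
      ≤ ‖x‖ ^ (i + j) * ‖q‖ ^ (i ^ 2 + j ^ 2) / ((1 - ‖q ^ 8‖) ^ i * (1 - ‖q ^ 8‖) ^ j) :=
        div_le_div₀ (by positivity) hnum hdpos hden
    _ = u x q i * u x q j := by
        rw [u, u, pow_add, pow_add, mul_pow, mul_pow, inv_pow, inv_pow]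
        field_simp

lemma summable_term (x q : ℂ) (hq : ‖q‖ < 1) : Summable (term x q) := by
  have hQ := hq8 hq
  have h1t : (0 : ℝ) < 1 - ‖q ^ 8‖ := by linarith
  have hu : Summable (u x q) := by
    apply summable_u (by positivity) (norm_nonneg q) hq
  have hpos : ∀ n, 0 ≤ u x q n := fun n => by rw [u]; positivity
  have hprod : Summable (fun p : ℕ × ℕ => u x q p.1 * u x q p.2) :=
    hu.mul_of_nonneg hu hpos hpos
  exact Summable.of_norm_bounded hprod (term_bound x q hq)

lemma tsum_step1 (x q : ℂ) (hq : ‖q‖ < 1) :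
    (∑' p : ℕ × ℕ, term x q p) = ∑' n : ℕ, S x q n := by
  have hsum' : Summable (fun c : (Σ n : ℕ, ↥(antidiagonal n)) =>
      term x q (Finset.HasAntidiagonal.sigmaAntidiagonalEquivProd c)) :=
    Finset.HasAntidiagonal.sigmaAntidiagonalEquivProd.summable_iff.mpr (summable_term x q hq)
  rw [← Finset.HasAntidiagonal.sigmaAntidiagonalEquivProd.tsum_eq (term x q),
    Summable.tsum_sigma' (fun n => (hasSum_fintype _).summable) hsum']
  exact tsum_congr fun n => Finset.tsum_subtype _ _

lemma tsum_step2 (x q : ℂ) (hq : ‖q‖ < 1) :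
    (∑' n : ℕ, S x q n) = ∑' m : ℕ, S x q (2 * m) := by
  refine (Function.Injective.tsum_eq (g := fun m : ℕ => 2 * m) (fun a b h => by have h2 : 2 * a = 2 * b := h; omega) ?_).symm
  intro n hn
  rcases Nat.even_or_odd n with he | ho
  · obtain ⟨m, hm⟩ := he
    exact ⟨m, show 2 * m = n by omega⟩
  · obtain ⟨m, hm⟩ := ho
    exfalso
    apply hn
    rw [hm]
    exact inner_odd x q hq m

end Stmt8Aux

theorem stmt_8 (x q : ℂ) (hq : ‖q‖ < 1) :
    (∑' p : ℕ × ℕ,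
        (-1 : ℂ) ^ p.2 * x ^ (p.1 + p.2) * q ^ (p.1 ^ 2 + 2 * p.1 * p.2 + p.2 ^ 2) /
          (qPoch (q ^ 8) (q ^ 8) p.1 * qPoch (q ^ 8) (q ^ 8) p.2))
      = ∑' n : ℕ, x ^ (2 * n) * q ^ (4 * n ^ 2) / qPoch (q ^ 16) (q ^ 16) n := by
  have h0 : (∑' p : ℕ × ℕ,
      (-1 : ℂ) ^ p.2 * x ^ (p.1 + p.2) * q ^ (p.1 ^ 2 + 2 * p.1 * p.2 + p.2 ^ 2) /
        (qPoch (q ^ 8) (q ^ 8) p.1 * qPoch (q ^ 8) (q ^ 8) p.2))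
      = ∑' p : ℕ × ℕ, Stmt8Aux.term x q p := rfl
  rw [h0, Stmt8Aux.tsum_step1 x q hq, Stmt8Aux.tsum_step2 x q hq]
  exact tsum_congr fun m => Stmt8Aux.inner_even x q hq m
end

section
/- Let x, q be complex numbers with |q| < 1. Then Σ_{i,j≥0} (−1)^(T(i−j)) · x^(i+j) · q^(3i²+2ij+3j²) / ((q⁴;q⁴)_i · (q⁴;q⁴)_j) = Σ_{n≥0} x^(2n) · q^(8n²) / (q⁸;q⁸)_n, where for an integer t, T(t) = t(t−1)/2. -/
open Finset

/-- The sign `(-1)^(T(i-j))` where `T(t) = t(t-1)/2` is computed in the integers. -/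
noncomputable def signT (i j : ℕ) : ℂ :=
  (-1 : ℂ) ^ ((((i : ℤ) - j) * ((i : ℤ) - j - 1)) / 2)

lemma qPoch_succ (a q : ℂ) (n : ℕ) :
    qPoch a q (n + 1) = qPoch a q n * (1 - a * q ^ n) := Finset.prod_range_succ _ _

lemma qPoch_ne_zero {a r : ℂ} (ha : ‖a‖ < 1) (hr : ‖r‖ ≤ 1) (n : ℕ) : qPoch a r n ≠ 0 := by
  rw [qPoch]
  apply Finset.prod_ne_zero_iff.2
  intro k _
  intro h
  have h1 : a * r ^ k = 1 := by
    have := sub_eq_zero.mp h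
    linear_combination -this
  have : ‖a * r ^ k‖ < 1 := by
    rw [norm_mul, norm_pow]
    calc ‖a‖ * ‖r‖ ^ k ≤ ‖a‖ * 1 := by
          apply mul_le_mul_of_nonneg_left _ (norm_nonneg a)
          exact pow_le_one₀ (norm_nonneg r) hr
      _ = ‖a‖ := mul_one _
      _ < 1 := ha
  rw [h1, norm_one] at this
  exact lt_irrefl _ this

/-- q-binomial coefficients via the Pascal recursion. -/
noncomputable def qb (Q : ℂ) : ℕ → ℕ → ℂ
  | 0, 0 => 1
  | 0, _ + 1 => 0
  | _ + 1, 0 => 1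
  | m + 1, j + 1 => qb Q m j + Q ^ (j + 1) * qb Q m (j + 1)

lemma qb_zero (Q : ℂ) (m : ℕ) : qb Q m 0 = 1 := by cases m <;> rfl

lemma qb_succ_succ (Q : ℂ) (m j : ℕ) :
    qb Q (m + 1) (j + 1) = qb Q m j + Q ^ (j + 1) * qb Q m (j + 1) := rfl

lemma qb_of_gt (Q : ℂ) : ∀ m j : ℕ, m < j → qb Q m j = 0 := by
  intro m
  induction m with
  | zero => intro j hj; match j, hj with | j + 1, _ => rfl
  | succ m ih =>
    intro j hj
    match j, hj with
    | j + 1, hj =>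
      rw [qb_succ_succ, ih j (by omega), ih (j + 1) (by omega)]
      ring

lemma qb_self (Q : ℂ) (m : ℕ) : qb Q m m = 1 := by
  induction m with
  | zero => rfl
  | succ m ih => rw [qb_succ_succ, ih, qb_of_gt Q m (m + 1) (by omega)]; ring

lemma qb_mul (Q : ℂ) : ∀ m j : ℕ, j ≤ m →
    qb Q m j * (qPoch Q Q j * qPoch Q Q (m - j)) = qPoch Q Q m := by
  intro m
  induction m with
  | zero =>
    intro j hj
    interval_cases j
    simp [qb, qPoch]
  | succ m ih =>
    intro j hj
    match j with
    | 0 =>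
      simp only [qb_zero, Nat.sub_zero, one_mul]
      simp [qPoch]
    | j + 1 =>
      rcases Nat.lt_or_ge j m with hjm | hjm
      · -- j + 1 ≤ m
        have h1 : m + 1 - (j + 1) = (m - (j + 1)) + 1 := by omega
        have h2 : m - j = (m - (j + 1)) + 1 := by omega
        rw [qb_succ_succ, h1, qPoch_succ Q Q (m - (j + 1)), qPoch_succ Q Q j]
        have e1 := ih j (by omega)
        have e2 := ih (j + 1) (by omega)
        rw [h2, qPoch_succ] at e1
        have hexp : Q ^ (j + 1) * (Q * Q ^ (m - (j + 1))) = Q * Q ^ m := by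
          rw [← pow_succ', ← pow_succ', ← pow_add]
          congr 1
          omega
        rw [qPoch_succ] at e2
        rw [qPoch_succ Q Q m]
        linear_combination (1 - Q*Q^j) * e1 + Q^(j+1)*(1 - Q*Q^(m-(j+1)))*e2 - qPoch Q Q m * hexp
      · -- j = m
        have hj' : j = m := by omega
        subst hj'
        rw [qb_succ_succ, qb_self, qb_of_gt Q j (j + 1) (by omega), Nat.sub_self]
        simp only [mul_zero, add_zero, one_mul]
        rw [show qPoch Q Q 0 = 1 from rfl, mul_one]
-- L2 and core identity
section Core
variable {Q : ℂ} (hQ : ‖Q‖ < 1)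

lemma one_sub_pow_ne (hQ : ‖Q‖ < 1) {k : ℕ} (hk : k ≠ 0) : 1 - Q ^ k ≠ 0 := by
  intro h
  have h1 : Q ^ k = 1 := by linear_combination -h
  have : ‖Q ^ k‖ < 1 := by
    rw [norm_pow]
    exact pow_lt_one₀ (norm_nonneg Q) hQ hk
  rw [h1, norm_one] at this
  exact lt_irrefl _ this

lemma qPochQ_ne (hQ : ‖Q‖ < 1) (n : ℕ) : qPoch Q Q n ≠ 0 :=
  qPoch_ne_zero hQ (le_of_lt hQ) n

lemma qb_eq_div (hQ : ‖Q‖ < 1) {m j : ℕ} (hj : j ≤ m) :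
    qb Q m j = qPoch Q Q m / (qPoch Q Q j * qPoch Q Q (m - j)) := by
  rw [eq_div_iff (mul_ne_zero (qPochQ_ne hQ j) (qPochQ_ne hQ (m - j)))]
  exact qb_mul Q m j hj

lemma L2 (hQ : ‖Q‖ < 1) (m j : ℕ) (hj : j ≤ m + 1) :
    (1 - Q ^ (m + 1 - j)) * qb Q (m + 1) j = (1 - Q ^ (m + 1)) * qb Q m j := by
  rcases Nat.lt_or_ge j (m + 1) with hjm | hjm
  · have hj' : j ≤ m := by omega
    rw [qb_eq_div hQ hj', qb_eq_div hQ (show j ≤ m + 1 by omega)]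
    have h1 : m + 1 - j = (m - j) + 1 := by omega
    rw [h1, qPoch_succ Q Q (m - j), qPoch_succ Q Q m]
    have hne1 : qPoch Q Q j ≠ 0 := qPochQ_ne hQ j
    have hne2 : qPoch Q Q (m - j) ≠ 0 := qPochQ_ne hQ (m - j)
    have hne3 : (1 : ℂ) - Q * Q ^ (m - j) ≠ 0 := by
      have := one_sub_pow_ne hQ (k := m - j + 1) (by omega)
      rwa [pow_succ'] at this
    field_simp
    ring
  · have hj' : j = m + 1 := by omega
    subst hj'
    rw [Nat.sub_self, pow_zero, sub_self, zero_mul, qb_of_gt Q m (m + 1) (by omega), mul_zero]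

/-- `|n - j|²` computed with truncated subtraction. -/
def eE (n j : ℕ) : ℕ := (n - j) ^ 2 + (j - n) ^ 2

lemma eE_succ_succ (n j : ℕ) : eE (n + 1) (j + 1) = eE n j := by
  unfold eE
  congr 2 <;> omega

lemma eE_exp (n j : ℕ) (hj : j ≤ 2 * n + 1) :
    eE (n + 1) j + j = eE n j + (2 * n + 1 - j) := by
  unfold eE
  rcases le_or_gt j n with h | h
  · rw [show n + 1 - j = (n - j) + 1 by omega, show j - (n + 1) = 0 by omega,
      show j - n = 0 by omega]
    zify [show j ≤ n from h, hj]
    ring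
  · rw [show n + 1 - j = 0 by omega, show n - j = 0 by omega]
    zify [show n + 1 ≤ j by omega, show n ≤ j by omega, hj]
    ring

lemma shift_sum (g : ℕ → ℂ) (N : ℕ) (htop : g N = 0) :
    ∑ j ∈ Finset.range N, g (j + 1) + g 0 = ∑ j ∈ Finset.range N, g j := by
  rw [← Finset.sum_range_succ' g N, Finset.sum_range_succ, htop, add_zero]

lemma core (hQ : ‖Q‖ < 1) (n : ℕ) :
    ∑ j ∈ Finset.range (2 * n + 1),
      (-1 : ℂ) ^ (n + j) * Q ^ (eE n j) * qb Q (2 * n) j = qPoch Q (Q ^ 2) n := by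
  induction n with
  | zero => simp [eE, qb_zero, qPoch]
  | succ n ih =>
    have e1 : 2 * (n + 1) = 2 * n + 1 + 1 := by ring
    rw [e1, Finset.sum_range_succ']
    set G : ℕ → ℂ := fun j => (-1 : ℂ) ^ (n + j + 1) * Q ^ (eE (n + 1) j + j) * qb Q (2 * n + 1) j
      with hG
    have hsummand : ∀ j ∈ Finset.range (2 * n + 1 + 1),
        (-1 : ℂ) ^ (n + 1 + (j + 1)) * Q ^ (eE (n + 1) (j + 1)) * qb Q (2 * n + 1 + 1) (j + 1)
          = (-1 : ℂ) ^ (n + j) * Q ^ (eE n j) * qb Q (2 * n + 1) j + G (j + 1) := by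
      intro j _
      simp only [hG]
      rw [qb_succ_succ, eE_succ_succ]
      have hsgn : (-1 : ℂ) ^ (n + 1 + (j + 1)) = (-1 : ℂ) ^ (n + j) := by
        rw [show n + 1 + (j + 1) = (n + j) + 2 by ring, pow_add]; norm_num
      have hsgn2 : (-1 : ℂ) ^ (n + (j + 1) + 1) = (-1 : ℂ) ^ (n + j) := by
        rw [show n + (j + 1) + 1 = (n + j) + 2 by ring, pow_add]; norm_num
      rw [hsgn, hsgn2, pow_add]
      ring
    rw [Finset.sum_congr rfl hsummand, Finset.sum_add_distrib]
    have hT0 : (-1 : ℂ) ^ (n + 1 + 0) * Q ^ (eE (n + 1) 0) * qb Q (2 * n + 1 + 1) 0 = G 0 := by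
      simp only [hG]
      rw [qb_zero, qb_zero]
      norm_num
    rw [hT0, add_assoc]
    have hGtop : G (2 * n + 1 + 1) = 0 := by
      simp only [hG]
      rw [qb_of_gt Q (2 * n + 1) (2 * n + 1 + 1) (by omega)]
      ring
    rw [shift_sum G (2 * n + 1 + 1) hGtop]
    rw [← Finset.sum_add_distrib]
    have hcomb : ∀ j ∈ Finset.range (2 * n + 1 + 1),
        (-1 : ℂ) ^ (n + j) * Q ^ (eE n j) * qb Q (2 * n + 1) j + G j
          = (1 - Q ^ (2 * n + 1)) * ((-1 : ℂ) ^ (n + j) * Q ^ (eE n j) * qb Q (2 * n) j) := by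
      intro j hj
      have hjle : j ≤ 2 * n + 1 := by
        simp only [Finset.mem_range] at hj; omega
      simp only [hG]
      have hL2 := L2 hQ (2 * n) j hjle
      have hE := eE_exp n j hjle
      have hsgn : (-1 : ℂ) ^ (n + j + 1) = -(-1 : ℂ) ^ (n + j) := by
        rw [pow_succ]; ring
      rw [hE, hsgn, pow_add]
      linear_combination ((-1 : ℂ) ^ (n + j) * Q ^ (eE n j)) * hL2
    rw [Finset.sum_congr rfl hcomb, ← Finset.mul_sum, Finset.sum_range_succ,
      qb_of_gt Q (2 * n) (2 * n + 1) (by omega)]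
    rw [ih, qPoch_succ, ← pow_mul, ← pow_succ']
    ring

end Core
-- Pochhammer even/odd split
lemma qPoch_split (Q : ℂ) (n : ℕ) :
    qPoch Q Q (2 * n) = qPoch Q (Q ^ 2) n * qPoch (Q ^ 2) (Q ^ 2) n := by
  induction n with
  | zero => simp [qPoch]
  | succ n ih =>
    have e1 : 2 * (n + 1) = (2 * n + 1) + 1 := by ring
    rw [e1, qPoch_succ, qPoch_succ, qPoch_succ Q (Q^2) n, qPoch_succ (Q^2) (Q^2) n, ih]
    have h1 : Q * Q ^ (2 * n) = Q * (Q ^ 2) ^ n := by rw [← pow_mul]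
    have h2 : Q * Q ^ (2 * n + 1) = Q ^ 2 * (Q ^ 2) ^ n := by
      rw [← pow_mul, ← pow_succ', ← pow_add]
      congr 1
      omega
    rw [h1, h2]
    ring

lemma core_div {Q : ℂ} (hQ : ‖Q‖ < 1) (n : ℕ) :
    ∑ j ∈ Finset.range (2 * n + 1),
      (-1 : ℂ) ^ (n + j) * Q ^ (eE n j) / (qPoch Q Q j * qPoch Q Q (2 * n - j))
      = 1 / qPoch (Q ^ 2) (Q ^ 2) n := by
  have hQ2 : ‖Q ^ 2‖ < 1 := by
    rw [norm_pow]
    exact pow_lt_one₀ (norm_nonneg Q) hQ (by norm_num)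
  have hP2n : qPoch Q Q (2 * n) ≠ 0 := qPochQ_ne hQ (2 * n)
  have hodd : qPoch Q (Q ^ 2) n ≠ 0 := qPoch_ne_zero hQ (le_of_lt hQ2) n
  have heven : qPoch (Q ^ 2) (Q ^ 2) n ≠ 0 := qPoch_ne_zero hQ2 (le_of_lt hQ2) n
  have hterm : ∀ j ∈ Finset.range (2 * n + 1),
      (-1 : ℂ) ^ (n + j) * Q ^ (eE n j) / (qPoch Q Q j * qPoch Q Q (2 * n - j))
        = ((-1 : ℂ) ^ (n + j) * Q ^ (eE n j) * qb Q (2 * n) j) / qPoch Q Q (2 * n) := by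
    intro j hj
    have hjle : j ≤ 2 * n := by simp only [Finset.mem_range] at hj; omega
    have h := qb_mul Q (2 * n) j hjle
    have h1 : qPoch Q Q j ≠ 0 := qPochQ_ne hQ j
    have h2 : qPoch Q Q (2 * n - j) ≠ 0 := qPochQ_ne hQ (2 * n - j)
    rw [qb_eq_div hQ hjle]
    field_simp
  rw [Finset.sum_congr rfl hterm, ← Finset.sum_div, core hQ n, qPoch_split Q n]
  field_simp

-- sign lemmas
lemma neg_one_zpow_eq (a b : ℤ) (h : ∃ c : ℤ, a = b + 2 * c) : ((-1 : ℂ) ^ a = (-1 : ℂ) ^ b) := by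
  obtain ⟨c, rfl⟩ := h
  rw [zpow_add₀ (by norm_num : (-1 : ℂ) ≠ 0), zpow_mul]
  norm_num

lemma signT_even (n k : ℕ) (hk : k ≤ 2 * n) : signT k (2 * n - k) = (-1 : ℂ) ^ (n + k) := by
  unfold signT
  have hcast : ((2 * n - k : ℕ) : ℤ) = 2 * (n : ℤ) - k := by omega
  rw [hcast]
  have h : ((k : ℤ) - (2 * n - k)) * ((k : ℤ) - (2 * n - k) - 1) / 2
      = ((n : ℤ) + k) + 2 * (((k : ℤ) - n) ^ 2 - k) := by
    have hN : ((k : ℤ) - (2 * n - k)) * ((k : ℤ) - (2 * n - k) - 1)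
        = 2 * (((n : ℤ) + k) + 2 * (((k : ℤ) - n) ^ 2 - k)) := by ring
    rw [hN, Int.mul_ediv_cancel_left _ (by norm_num)]
  rw [h, neg_one_zpow_eq _ ((n : ℤ) + k) ⟨((k : ℤ) - n) ^ 2 - k, rfl⟩]
  rw [show ((n : ℤ) + k) = ((n + k : ℕ) : ℤ) by push_cast; ring, zpow_natCast]

lemma signT_swap_odd (i j : ℕ) (hodd : ¬ 2 ∣ (i + j)) : signT j i = -signT i j := by
  unfold signT
  obtain ⟨t, ht⟩ : ∃ t : ℤ, ((i : ℤ) - j) * ((i : ℤ) - j - 1) = 2 * t := by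
    rcases Int.even_mul_succ_self ((i : ℤ) - j - 1) with ⟨t, ht⟩
    exact ⟨t, by linear_combination ht⟩
  have h1 : ((i : ℤ) - j) * ((i : ℤ) - j - 1) / 2 = t := by
    rw [ht, Int.mul_ediv_cancel_left _ (by norm_num)]
  have h2 : ((j : ℤ) - i) * ((j : ℤ) - i - 1) / 2 = t + ((i : ℤ) - j) := by
    have hN : ((j : ℤ) - i) * ((j : ℤ) - i - 1) = 2 * (t + ((i : ℤ) - j)) := by
      linear_combination ht
    rw [hN, Int.mul_ediv_cancel_left _ (by norm_num)]
  obtain ⟨s, hs⟩ : ∃ s : ℤ, (i : ℤ) - j = 2 * s + 1 := by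
    refine ⟨(i : ℤ) - ((i + j : ℕ) / 2 : ℕ) - 1 + ((i + j : ℕ) % 2) - 1, ?_⟩
    omega
  rw [h1, h2, hs, zpow_add₀ (by norm_num : (-1 : ℂ) ≠ 0),
    zpow_add₀ (by norm_num : (-1 : ℂ) ≠ 0), zpow_mul]
  norm_num
noncomputable def term (x q : ℂ) (p : ℕ × ℕ) : ℂ :=
  signT p.1 p.2 * x ^ (p.1 + p.2) * q ^ (3 * p.1 ^ 2 + 2 * p.1 * p.2 + 3 * p.2 ^ 2) /
    (qPoch (q ^ 4) (q ^ 4) p.1 * qPoch (q ^ 4) (q ^ 4) p.2)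

lemma odd_sum (x q : ℂ) (N : ℕ) (hN : ¬ 2 ∣ N) :
    ∑ p ∈ Finset.HasAntidiagonal.antidiagonal N, term x q p = 0 := by
  have hswap : ∑ p ∈ Finset.HasAntidiagonal.antidiagonal N, term x q p
      = ∑ p ∈ Finset.HasAntidiagonal.antidiagonal N, term x q p.swap := by
    conv_lhs => rw [← Finset.HasAntidiagonal.map_swap_antidiagonal]
    rw [Finset.sum_map]
    rfl
  have hneg : ∀ p ∈ Finset.HasAntidiagonal.antidiagonal N, term x q p.swap = - term x q p := by
    intro p hp
    obtain ⟨i, j⟩ := p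
    rw [Finset.HasAntidiagonal.mem_antidiagonal] at hp
    have hodd : ¬ 2 ∣ (i + j) := by rw [hp]; exact hN
    simp only [term, Prod.swap]
    rw [signT_swap_odd i j hodd]
    rw [show j + i = i + j by ring,
      show 3 * j ^ 2 + 2 * j * i + 3 * i ^ 2 = 3 * i ^ 2 + 2 * i * j + 3 * j ^ 2 by ring]
    ring
  have h2 : ∑ p ∈ Finset.HasAntidiagonal.antidiagonal N, term x q p
      = - ∑ p ∈ Finset.HasAntidiagonal.antidiagonal N, term x q p := by
    conv_lhs => rw [hswap, Finset.sum_congr rfl hneg]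
    simp
  have := h2
  have h3 : (2 : ℂ) * ∑ p ∈ Finset.HasAntidiagonal.antidiagonal N, term x q p = 0 := by
    linear_combination h2
  have h4 := mul_eq_zero.mp h3
  rcases h4 with h | h
  · norm_num at h
  · exact h

lemma even_sum (x q : ℂ) (hq : ‖q‖ < 1) (n : ℕ) :
    ∑ p ∈ Finset.HasAntidiagonal.antidiagonal (2 * n), term x q p
      = x ^ (2 * n) * q ^ (8 * n ^ 2) / qPoch (q ^ 8) (q ^ 8) n := by
  have hQ : ‖q ^ 4‖ < 1 := by
    rw [norm_pow]; exact pow_lt_one₀ (norm_nonneg q) hq (by norm_num)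
  rw [Finset.Nat.sum_antidiagonal_eq_sum_range_succ_mk]
  have hterm : ∀ k ∈ Finset.range (2 * n).succ, term x q (k, 2 * n - k)
      = x ^ (2 * n) * q ^ (8 * n ^ 2) *
        ((-1 : ℂ) ^ (n + k) * (q ^ 4) ^ (eE n k) /
          (qPoch (q ^ 4) (q ^ 4) k * qPoch (q ^ 4) (q ^ 4) (2 * n - k))) := by
    intro k hk
    have hkle : k ≤ 2 * n := by simp only [Finset.mem_range] at hk; omega
    simp only [term]
    rw [signT_even n k hkle, show k + (2 * n - k) = 2 * n by omega]
    have hexp : 3 * k ^ 2 + 2 * k * (2 * n - k) + 3 * (2 * n - k) ^ 2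
        = 8 * n ^ 2 + 4 * eE n k := by
      unfold eE
      rcases le_or_gt k n with h | h
      · rw [show k - n = 0 by omega]
        zify [hkle, h]
        ring
      · rw [show n - k = 0 by omega]
        zify [hkle, show n ≤ k by omega]
        ring
    rw [hexp, pow_add, pow_mul]
    ring
  rw [Finset.sum_congr rfl hterm, ← Finset.mul_sum]
  have hd := core_div hQ n
  rw [show ((q ^ 4) ^ 2 : ℂ) = q ^ 8 by ring] at hd
  rw [show (2 * n).succ = 2 * n + 1 from rfl, hd, mul_one_div]
open Filter in
lemma prod_one_sub_ge (u : ℕ → ℝ) (h0 : ∀ k, 0 ≤ u k) (h1 : ∀ k, u k ≤ 1) (m : ℕ) :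
    1 - ∑ k ∈ Finset.range m, u k ≤ ∏ k ∈ Finset.range m, (1 - u k) := by
  induction m with
  | zero => simp
  | succ m ih =>
    rw [Finset.prod_range_succ, Finset.sum_range_succ]
    have hS : 0 ≤ ∑ k ∈ Finset.range m, u k := Finset.sum_nonneg fun k _ => h0 k
    nlinarith [h0 m, h1 m, ih]

open Filter in
lemma qPoch_lower {a r : ℂ} (ha : ‖a‖ < 1) (hr : ‖r‖ < 1) :
    ∃ c > 0, ∀ i, c ≤ ‖qPoch a r i‖ := by
  set t : ℕ → ℝ := fun k => ‖a‖ * ‖r‖ ^ k with htdef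
  have ht0 : ∀ k, 0 ≤ t k := fun k => by positivity
  have ht1 : ∀ k, t k < 1 := fun k => by
    calc t k ≤ ‖a‖ * 1 := by
          apply mul_le_mul_of_nonneg_left _ (norm_nonneg a)
          exact pow_le_one₀ (norm_nonneg r) (le_of_lt hr)
      _ < 1 := by simpa using ha
  have hnorm : ∀ i, ∏ k ∈ Finset.range i, (1 - t k) ≤ ‖qPoch a r i‖ := by
    intro i
    rw [qPoch, norm_prod]
    apply Finset.prod_le_prod (fun k _ => by linarith [ht1 k]) (fun k _ => ?_)
    calc 1 - t k = ‖(1 : ℂ)‖ - ‖a * r ^ k‖ := by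
          rw [norm_one, norm_mul, norm_pow]
      _ ≤ ‖1 - a * r ^ k‖ := norm_sub_norm_le _ _
  have h3 : Tendsto (fun n : ℕ => ‖a‖ * ‖r‖ ^ n) atTop (nhds 0) := by
    have := (tendsto_pow_atTop_nhds_zero_of_lt_one (norm_nonneg r) hr).const_mul ‖a‖
    simpa using this
  obtain ⟨M, hM⟩ : ∃ M : ℕ, ‖a‖ * ‖r‖ ^ M < (1 - ‖r‖) / 2 :=
    (h3.eventually (gt_mem_nhds (by linarith : (0:ℝ) < (1 - ‖r‖) / 2))).exists
  set C : ℝ := ∏ k ∈ Finset.range M, (1 - t k) with hCdef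
  have hCpos : 0 < C := Finset.prod_pos fun k _ => by linarith [ht1 k]
  refine ⟨C / 2, by linarith, fun i => le_trans ?_ (hnorm i)⟩
  rcases le_or_gt i M with h | h
  · have hsplit := Finset.prod_range_add (fun k => (1 - t k)) i (M - i)
    rw [show i + (M - i) = M by omega] at hsplit
    rw [← hCdef] at hsplit
    have hle1 : ∏ k ∈ Finset.range (M - i), (1 - t (i + k)) ≤ 1 :=
      Finset.prod_le_one (fun k _ => by linarith [ht1 (i + k)]) (fun k _ => by linarith [ht0 (i + k)])
    have hpos : 0 < ∏ k ∈ Finset.range i, (1 - t k) :=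
      Finset.prod_pos fun k _ => by linarith [ht1 k]
    nlinarith [hsplit, hpos, hCpos, mul_le_mul_of_nonneg_left hle1 (le_of_lt hpos)]
  · have hsplit := Finset.prod_range_add (fun k => (1 - t k)) M (i - M)
    rw [show M + (i - M) = i by omega, ← hCdef] at hsplit
    have hsum : ∑ k ∈ Finset.range (i - M), t (M + k) ≤ 1 / 2 := by
      have hgeo : ∀ k, t (M + k) = (‖a‖ * ‖r‖ ^ M) * ‖r‖ ^ k := by
        intro k; rw [htdef]; simp only [pow_add]; ring
      calc ∑ k ∈ Finset.range (i - M), t (M + k)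
          = (‖a‖ * ‖r‖ ^ M) * ∑ k ∈ Finset.range (i - M), ‖r‖ ^ k := by
            rw [Finset.mul_sum]; exact Finset.sum_congr rfl fun k _ => hgeo k
        _ ≤ (‖a‖ * ‖r‖ ^ M) * (1 - ‖r‖)⁻¹ := by
            apply mul_le_mul_of_nonneg_left _ (by positivity)
            calc ∑ k ∈ Finset.range (i - M), ‖r‖ ^ k
                ≤ ∑' k : ℕ, ‖r‖ ^ k := Summable.sum_le_tsum _ (fun k _ => by positivity)
                  (summable_geometric_of_lt_one (norm_nonneg r) hr)
              _ = (1 - ‖r‖)⁻¹ := tsum_geometric_of_lt_one (norm_nonneg r) hr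
        _ ≤ 1 / 2 := by
            have h4 : (0:ℝ) < 1 - ‖r‖ := by linarith
            calc (‖a‖ * ‖r‖ ^ M) * (1 - ‖r‖)⁻¹ ≤ ((1 - ‖r‖) / 2) * (1 - ‖r‖)⁻¹ := by
                  apply mul_le_mul_of_nonneg_right (le_of_lt hM)
                  positivity
              _ = 1 / 2 := by
                  have h5 : (1 - ‖r‖) ≠ 0 := ne_of_gt h4
                  rw [div_mul_eq_mul_div, mul_inv_cancel₀ h5]
    have hge : 1 / 2 ≤ ∏ k ∈ Finset.range (i - M), (1 - t (M + k)) := by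
      have := prod_one_sub_ge (fun k => t (M + k)) (fun k => ht0 _)
        (fun k => le_of_lt (ht1 _)) (i - M)
      linarith
    rw [hsplit]
    nlinarith [hCpos, hge, mul_le_mul_of_nonneg_left hge (le_of_lt hCpos)]
open Filter in
lemma summable_aux (X Y : ℝ) (hX : 0 ≤ X) (hY0 : 0 ≤ Y) (hY : Y < 1) :
    Summable (fun i : ℕ => X ^ i * Y ^ (i ^ 2)) := by
  obtain ⟨N, hN⟩ : ∃ N : ℕ, X * Y ^ N < 1 := by
    have h3 : Tendsto (fun n : ℕ => X * Y ^ n) atTop (nhds 0) := by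
      have := (tendsto_pow_atTop_nhds_zero_of_lt_one hY0 hY).const_mul X
      simpa using this
    exact (h3.eventually (gt_mem_nhds (by norm_num : (0:ℝ) < 1))).exists
  have hr0 : 0 ≤ X * Y ^ N := by positivity
  apply (summable_nat_add_iff N).mp
  refine Summable.of_nonneg_of_le (f := fun i => X ^ N * (X * Y ^ N) ^ i)
    (fun i => by positivity) (fun i => ?_)
    ((summable_geometric_of_lt_one hr0 hN).mul_left _)
  have h1 : Y ^ ((i + N) ^ 2) ≤ Y ^ (N * i) :=
    pow_le_pow_of_le_one hY0 (le_of_lt hY) (by nlinarith)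
  calc X ^ (i + N) * Y ^ ((i + N) ^ 2) ≤ X ^ (i + N) * Y ^ (N * i) := by
        apply mul_le_mul_of_nonneg_left h1 (by positivity)
    _ = X ^ N * (X * Y ^ N) ^ i := by
        rw [mul_pow, pow_add, ← pow_mul]
        ring

set_option maxHeartbeats 1000000 in
lemma summable_term (x q : ℂ) (hq : ‖q‖ < 1) : Summable (term x q) := by
  have hQ : ‖(q : ℂ) ^ 4‖ < 1 := by
    rw [norm_pow]; exact pow_lt_one₀ (norm_nonneg q) hq (by norm_num)
  obtain ⟨c, hc, hlow⟩ := qPoch_lower hQ hQ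
  have hg : Summable (fun i : ℕ => ‖x‖ ^ i * ‖q‖ ^ (i ^ 2)) :=
    summable_aux ‖x‖ ‖q‖ (norm_nonneg x) (norm_nonneg q) hq
  have hgg : Summable (fun p : ℕ × ℕ =>
      (‖x‖ ^ p.1 * ‖q‖ ^ (p.1 ^ 2)) * (‖x‖ ^ p.2 * ‖q‖ ^ (p.2 ^ 2))) :=
    hg.mul_of_nonneg hg (fun i => by positivity) (fun j => by positivity)
  apply Summable.of_norm_bounded (g := fun p : ℕ × ℕ => c⁻¹ * c⁻¹ *
      ((‖x‖ ^ p.1 * ‖q‖ ^ (p.1 ^ 2)) * (‖x‖ ^ p.2 * ‖q‖ ^ (p.2 ^ 2))))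
    (hgg.mul_left _)
  intro p
  obtain ⟨i, j⟩ := p
  have hs : ‖signT i j‖ = 1 := by
    unfold signT
    rw [norm_zpow]
    norm_num
  have hkey : ‖term x q (i, j)‖ = ‖x‖ ^ (i + j) * ‖q‖ ^ (3 * i ^ 2 + 2 * i * j + 3 * j ^ 2) /
      (‖qPoch (q ^ 4) (q ^ 4) i‖ * ‖qPoch (q ^ 4) (q ^ 4) j‖) := by
    have h0 : term x q (i, j) = signT i j * x ^ (i + j) *
        q ^ (3 * i ^ 2 + 2 * i * j + 3 * j ^ 2) /
        (qPoch (q ^ 4) (q ^ 4) i * qPoch (q ^ 4) (q ^ 4) j) := rfl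
    rw [h0, norm_div, norm_mul, norm_mul, norm_mul, norm_pow, norm_pow, hs, one_mul]
  rw [hkey]
  have hnum : ‖x‖ ^ (i + j) * ‖q‖ ^ (3 * i ^ 2 + 2 * i * j + 3 * j ^ 2)
      ≤ (‖x‖ ^ i * ‖q‖ ^ (i ^ 2)) * (‖x‖ ^ j * ‖q‖ ^ (j ^ 2)) := by
    have h1 : ‖q‖ ^ (3 * i ^ 2 + 2 * i * j + 3 * j ^ 2) ≤ ‖q‖ ^ (i ^ 2 + j ^ 2) :=
      pow_le_pow_of_le_one (norm_nonneg q) (le_of_lt hq) (by nlinarith)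
    calc ‖x‖ ^ (i + j) * ‖q‖ ^ (3 * i ^ 2 + 2 * i * j + 3 * j ^ 2)
        ≤ ‖x‖ ^ (i + j) * ‖q‖ ^ (i ^ 2 + j ^ 2) := by
          apply mul_le_mul_of_nonneg_left h1 (by positivity)
      _ = (‖x‖ ^ i * ‖q‖ ^ (i ^ 2)) * (‖x‖ ^ j * ‖q‖ ^ (j ^ 2)) := by
          rw [pow_add, pow_add]; ring
  calc ‖x‖ ^ (i + j) * ‖q‖ ^ (3 * i ^ 2 + 2 * i * j + 3 * j ^ 2) /
      (‖qPoch (q ^ 4) (q ^ 4) i‖ * ‖qPoch (q ^ 4) (q ^ 4) j‖)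
      ≤ ‖x‖ ^ (i + j) * ‖q‖ ^ (3 * i ^ 2 + 2 * i * j + 3 * j ^ 2) / (c * c) := by
        gcongr
        · exact hlow i
        · exact hlow j
    _ ≤ (‖x‖ ^ i * ‖q‖ ^ (i ^ 2)) * (‖x‖ ^ j * ‖q‖ ^ (j ^ 2)) / (c * c) := by
        gcongr
    _ = c⁻¹ * c⁻¹ * ((‖x‖ ^ i * ‖q‖ ^ (i ^ 2)) * (‖x‖ ^ j * ‖q‖ ^ (j ^ 2))) := by
        rw [div_eq_mul_inv, mul_inv]
        ring

lemma tsum_antidiag (F : ℕ × ℕ → ℂ) (h : Summable F) :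
    ∑' p : ℕ × ℕ, F p = ∑' n : ℕ, ∑ p ∈ Finset.HasAntidiagonal.antidiagonal n, F p := by
  conv_rhs => congr; ext; rw [← Finset.sum_finset_coe, ← tsum_fintype (L := SummationFilter.unconditional _)]
  rw [← Finset.HasAntidiagonal.sigmaAntidiagonalEquivProd.tsum_eq F]
  exact Summable.tsum_sigma' (fun n => (hasSum_fintype _).summable)
    (Finset.HasAntidiagonal.sigmaAntidiagonalEquivProd.summable_iff.mpr h)

theorem stmt_9 (x q : ℂ) (hq : ‖q‖ < 1) :
    (∑' p : ℕ × ℕ,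
        signT p.1 p.2 * x ^ (p.1 + p.2) *
          q ^ (3 * p.1 ^ 2 + 2 * p.1 * p.2 + 3 * p.2 ^ 2) /
          (qPoch (q ^ 4) (q ^ 4) p.1 * qPoch (q ^ 4) (q ^ 4) p.2))
      = ∑' n : ℕ, x ^ (2 * n) * q ^ (8 * n ^ 2) / qPoch (q ^ 8) (q ^ 8) n := by
  have hsum := summable_term x q hq
  calc (∑' p : ℕ × ℕ,
        signT p.1 p.2 * x ^ (p.1 + p.2) *
          q ^ (3 * p.1 ^ 2 + 2 * p.1 * p.2 + 3 * p.2 ^ 2) /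
          (qPoch (q ^ 4) (q ^ 4) p.1 * qPoch (q ^ 4) (q ^ 4) p.2))
      = ∑' p : ℕ × ℕ, term x q p := rfl
    _ = ∑' N : ℕ, ∑ p ∈ Finset.HasAntidiagonal.antidiagonal N, term x q p := tsum_antidiag _ hsum
    _ = ∑' n : ℕ, ∑ p ∈ Finset.HasAntidiagonal.antidiagonal (2 * n), term x q p := by
        refine (Function.Injective.tsum_eq (g := fun n : ℕ => 2 * n)
          (fun a b hab => by
            have hab' : 2 * a = 2 * b := hab
            omega) ?_).symm
        intro N hN
        have h2 : 2 ∣ N := by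
          by_contra h2
          exact hN (odd_sum x q N h2)
        obtain ⟨k, rfl⟩ := h2
        exact ⟨k, rfl⟩
    _ = ∑' n : ℕ, x ^ (2 * n) * q ^ (8 * n ^ 2) / qPoch (q ^ 8) (q ^ 8) n :=
        tsum_congr fun n => even_sum x q hq n
end
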